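/- Let f₁, …, f_n : ℝ^d → ℝ be differentiable, convex, and each L-smooth, f(x) = (1/n)∑_{j=1}^n f_j(x), and fix x, x̃ ∈ ℝ^d. For each worker i = 1,…,N let u_i = (1/B)∑_{a∈I_i}[∇f_a(x) − ∇f_a(x̃)], where the mini-batches I_i consist of B indices sampled uniformly and independently (with replacement, and independently across workers) from {1,…,n}. Let Y_1,…,Y_N be random vectors such that for each i, E[‖Y_i − u_i‖² | I_1,…,I_N] ≤ κ·‖u_i‖², where κ = d·λ²/(4(2^{b−1}−1)²) + d_λ(1−λ)² for some λ ∈ (0,1], integer b ≥ 2 and integer 0 ≤ d_λ ≤ d. Set v = (1/N)∑_{i=1}^N Y_i + ∇f(x̃). Then E‖v − ∇f(x)‖² ≤ 4L·[d·λ²/(4(2^{b−1}−1)²) + d_λ(1−λ)² + 1/(NB)]·[f(x̃) − f(x) − ⟨∇f(x), x̃ − x⟩]. -/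

import Mathlib

open MeasureTheory ProbabilityTheory
open scoped ProbabilityTheory BigOperators ENNReal RealInnerProductSpace

section auxAnalysis

variable {F : Type*} [NormedAddCommGroup F] [InnerProductSpace ℝ F] [CompleteSpace F]

lemma aux_line_deriv {f : F → ℝ} {x y : F} (v : F) (t : ℝ)
    (hf : HasGradientAt f v (x + t • (y - x))) :
    HasDerivAt (fun s : ℝ => f (x + s • (y - x))) ⟪v, y - x⟫ t := by
  have hL : HasDerivAt (fun s : ℝ => x + s • (y - x)) (y - x) t := by
    simpa using ((hasDerivAt_id t).smul_const (y - x)).const_add x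
  have := hf.hasFDerivAt.comp_hasDerivAt t hL
  simpa [InnerProductSpace.toDual_apply_apply, Function.comp_def] using this

lemma aux_grad_ineq {f : F → ℝ} {x y gx : F} (hf : HasGradientAt f gx x)
    (hc : ConvexOn ℝ Set.univ f) : f x + ⟪gx, y - x⟫ ≤ f y := by
  have hφd : HasDerivAt (fun t : ℝ => f (x + t • (y - x))) ⟪gx, y - x⟫ 0 :=
    aux_line_deriv gx 0 (by simpa using hf)
  have hφc : ConvexOn ℝ Set.univ (fun t : ℝ => f (x + t • (y - x))) := by
    have := hc.comp_affineMap (AffineMap.lineMap x y)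
    have heq : (fun t : ℝ => f (x + t • (y - x))) = f ∘ (AffineMap.lineMap x y) := by
      funext t; simp [AffineMap.lineMap_apply, add_comm]
    rw [heq]; simpa using this
  have := hφc.le_slope_of_hasDerivAt (Set.mem_univ (0:ℝ)) (Set.mem_univ (1:ℝ)) one_pos hφd
  simp only [slope_def_field, zero_smul, add_zero, one_smul, sub_zero, div_one] at this
  have hx1 : x + (y - x) = y := by abel
  rw [hx1] at this
  linarith

lemma aux_descent {f : F → ℝ} {g : F → F} (hg : ∀ z, HasGradientAt f (g z) z)
    {L : ℝ} (hL0 : 0 ≤ L) (hL : ∀ a b, ‖g a - g b‖ ≤ L * ‖a - b‖) (x y : F) :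
    f y ≤ f x + ⟪g x, y - x⟫ + L / 2 * ‖y - x‖ ^ 2 := by
  set φ' : ℝ → ℝ := fun t => ⟪g (x + t • (y - x)), y - x⟫ with hφ'
  have hgc : Continuous g := by
    apply (LipschitzWith.of_dist_le_mul (K := ⟨L, hL0⟩) ?_).continuous
    intro a b; rw [dist_eq_norm, dist_eq_norm]; exact hL a b
  have hcont : Continuous φ' := by
    apply Continuous.inner
    · exact hgc.comp (by continuity)
    · exact continuous_const
  have hderiv : ∀ t ∈ Set.uIcc (0:ℝ) 1,
      HasDerivAt (fun s : ℝ => f (x + s • (y - x))) (φ' t) t :=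
    fun t _ => aux_line_deriv _ t (hg _)
  have hftc : ∫ t in (0:ℝ)..1, φ' t = f (x + (1:ℝ) • (y - x)) - f (x + (0:ℝ) • (y - x)) := by
    have := intervalIntegral.integral_eq_sub_of_hasDerivAt hderiv
      (hcont.intervalIntegrable 0 1)
    simpa using this
  have hkey : ∀ c m : ℝ, ∫ t in (0:ℝ)..1, (c + m * t) = c + m / 2 := by
    intro c m
    have h1 : IntervalIntegrable (fun t : ℝ => m * t) MeasureTheory.volume 0 1 :=
      (by fun_prop : Continuous fun t : ℝ => m * t).intervalIntegrable 0 1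
    rw [intervalIntegral.integral_add intervalIntegrable_const h1,
      intervalIntegral.integral_const_mul, integral_id, intervalIntegral.integral_const]
    simp; ring
  have hbound : ∀ t ∈ Set.Icc (0:ℝ) 1,
      φ' t ≤ ⟪g x, y - x⟫ + (L * ‖y - x‖ ^ 2) * t := by
    intro t ht
    have h1 : φ' t - ⟪g x, y - x⟫ = ⟪g (x + t • (y - x)) - g x, y - x⟫ := by
      rw [hφ']; rw [inner_sub_left]
    have h2 : ⟪g (x + t • (y - x)) - g x, y - x⟫ ≤ ‖g (x + t • (y - x)) - g x‖ * ‖y - x‖ :=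
      real_inner_le_norm _ _
    have h3 : ‖g (x + t • (y - x)) - g x‖ ≤ L * (t * ‖y - x‖) := by
      have := hL (x + t • (y - x)) x
      simpa [norm_smul, abs_of_nonneg ht.1] using this
    nlinarith [norm_nonneg (y - x), mul_le_mul_of_nonneg_right h3 (norm_nonneg (y - x))]
  have hint : ∫ t in (0:ℝ)..1, φ' t ≤ ⟪g x, y - x⟫ + L / 2 * ‖y - x‖ ^ 2 := by
    calc ∫ t in (0:ℝ)..1, φ' t
        ≤ ∫ t in (0:ℝ)..1, (⟪g x, y - x⟫ + (L * ‖y - x‖ ^ 2) * t) := by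
          apply intervalIntegral.integral_mono_on zero_le_one (hcont.intervalIntegrable 0 1)
          · exact (by fun_prop :
              Continuous fun t : ℝ => ⟪g x, y - x⟫ + (L * ‖y - x‖ ^ 2) * t).intervalIntegrable 0 1
          · exact hbound
      _ = ⟪g x, y - x⟫ + L / 2 * ‖y - x‖ ^ 2 := by rw [hkey]; ring
  have h01 : x + (1:ℝ) • (y - x) = y := by simp
  have h00 : x + (0:ℝ) • (y - x) = x := by simp
  rw [h01, h00] at hftc
  linarith [hftc ▸ hint]

lemma aux_cocoercive {f : F → ℝ} {g : F → F} (hg : ∀ z, HasGradientAt f (g z) z)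
    (hc : ConvexOn ℝ Set.univ f)
    {L : ℝ} (hL0 : 0 ≤ L) (hL : ∀ a b, ‖g a - g b‖ ≤ L * ‖a - b‖) (x y : F) :
    ‖g y - g x‖ ^ 2 ≤ 2 * L * (f y - f x - ⟪g x, y - x⟫) := by
  rcases eq_or_lt_of_le hL0 with hL0' | hLpos
  · have h1 : ‖g y - g x‖ ≤ 0 := by simpa [← hL0'] using hL y x
    have h2 : ‖g y - g x‖ = 0 := le_antisymm h1 (norm_nonneg _)
    rw [← hL0']
    simp [pow_two, h2]
  · -- main case
    set h : F → ℝ := fun z => f z - ⟪g x, z⟫ with hh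
    set G : F → F := fun z => g z - g x with hG
    have hGgrad : ∀ z, HasGradientAt h (G z) z := by
      intro z
      rw [hasGradientAt_iff_hasFDerivAt]
      have h1 : HasFDerivAt f (InnerProductSpace.toDual ℝ F (g z)) z := (hg z).hasFDerivAt
      have h2 : HasFDerivAt (fun w => ⟪g x, w⟫ : F → ℝ)
          (InnerProductSpace.toDual ℝ F (g x)) z := by
        convert (InnerProductSpace.toDual ℝ F (g x)).hasFDerivAt (x := z) using 1
        ext w; simp [InnerProductSpace.toDual_apply_apply]
      have := h1.sub h2
      rw [← map_sub] at this
      exact this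
    have hGL : ∀ a b, ‖G a - G b‖ ≤ L * ‖a - b‖ := by
      intro a b; simpa [hG, sub_sub_sub_cancel_right] using hL a b
    set z₀ : F := y - L⁻¹ • (g y - g x) with hz₀
    have hdesc := aux_descent hGgrad hL0 hGL y z₀
    have hmin : h x ≤ h z₀ := by
      have := aux_grad_ineq (hg x) hc (y := z₀)
      simp only [hh]
      have hinner : ⟪g x, z₀ - x⟫ = ⟪g x, z₀⟫ - ⟪g x, x⟫ := inner_sub_right _ _ _
      linarith [this, hinner ▸ this]
    have hz₀y : z₀ - y = -(L⁻¹ • (g y - g x)) := by rw [hz₀]; abel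
    have hGy : G y = g y - g x := rfl
    have hin : ⟪G y, z₀ - y⟫ = -(L⁻¹ * ‖g y - g x‖ ^ 2) := by
      rw [hz₀y, hGy, inner_neg_right, real_inner_smul_right, real_inner_self_eq_norm_sq]
    have hnz : ‖z₀ - y‖ ^ 2 = L⁻¹ ^ 2 * ‖g y - g x‖ ^ 2 := by
      rw [hz₀y, norm_neg, norm_smul]
      rw [mul_pow]
      congr 1
      rw [Real.norm_eq_abs, sq_abs]
    have hhy : h y - h x ≥ L⁻¹ * ‖g y - g x‖ ^ 2 - L / 2 * (L⁻¹ ^ 2 * ‖g y - g x‖ ^ 2) := by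
      rw [hin, hnz] at hdesc
      have := hmin.trans hdesc
      linarith
    have hsimp : L⁻¹ * ‖g y - g x‖ ^ 2 - L / 2 * (L⁻¹ ^ 2 * ‖g y - g x‖ ^ 2)
        = ‖g y - g x‖ ^ 2 / (2 * L) := by
      field_simp
      ring
    have hfinal : h y - h x = f y - f x - ⟪g x, y - x⟫ := by
      simp only [hh, inner_sub_right]
      ring
    rw [hsimp] at hhy
    rw [hfinal] at hhy
    rw [ge_iff_le, div_le_iff₀ (by positivity)] at hhy
    linarith

end auxAnalysis

section auxProbability

variable {Ω : Type*} [MeasureSpace Ω] [IsProbabilityMeasure (ℙ : Measure Ω)]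

lemma aux_int_of_bound {h : Ω → ℝ} (hm : AEStronglyMeasurable h ℙ) (C : ℝ)
    (hb : ∀ ω, |h ω| ≤ C) : Integrable h ℙ :=
  (integrable_const C).mono' hm (Filter.Eventually.of_forall fun ω => by
    simpa [Real.norm_eq_abs] using hb ω)

lemma aux_unif_exp {n : ℕ} (hn : 0 < n) {J : Ω → Fin n} (hJ : Measurable J)
    (hJu : ∀ k, ℙ {ω | J ω = k} = (n : ℝ≥0∞)⁻¹) (φ : Fin n → ℝ) :
    ∫ ω, φ (J ω) = (n : ℝ)⁻¹ * ∑ k, φ k := by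
  have hms : ∀ k : Fin n, MeasurableSet {ω | J ω = k} := fun k =>
    hJ (measurableSet_singleton k)
  have heq : (fun ω => φ (J ω))
      = fun ω => ∑ k, Set.indicator {ω' | J ω' = k} (fun _ => φ k) ω := by
    funext ω
    rw [Finset.sum_eq_single_of_mem (J ω) (Finset.mem_univ _)]
    · simp [Set.indicator_of_mem, Set.mem_setOf_eq]
    · intro k _ hk
      exact Set.indicator_of_notMem (by simp [Ne.symm hk]) _
  rw [heq, integral_finset_sum _ (fun k _ =>
    (integrable_const (φ k)).indicator (hms k))]
  have : ∀ k : Fin n, ∫ ω, Set.indicator {ω' | J ω' = k} (fun _ => φ k) ω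
      = (n : ℝ)⁻¹ * φ k := by
    intro k
    rw [integral_indicator_const _ (hms k), measureReal_def, hJu k]
    simp [ENNReal.toReal_inv]
  simp only [this]
  rw [Finset.mul_sum]

lemma aux_norm_avg_sq {F : Type*} [NormedAddCommGroup F] [InnerProductSpace ℝ F]
    {ι : Type*} [Fintype ι] (v : ι → F) :
    ‖∑ i, v i‖ ^ 2 ≤ (Fintype.card ι : ℝ) * ∑ i, ‖v i‖ ^ 2 := by
  have h1 : ‖∑ i, v i‖ ≤ ∑ i, ‖v i‖ := norm_sum_le _ _
  have h2 : (∑ i, ‖v i‖) ^ 2 ≤ (Fintype.card ι : ℝ) * ∑ i, ‖v i‖ ^ 2 := by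
    simpa [Finset.card_univ] using
      sq_sum_le_card_mul_sum_sq (s := (Finset.univ : Finset ι)) (f := fun i => ‖v i‖)
  calc ‖∑ i, v i‖ ^ 2 ≤ (∑ i, ‖v i‖) ^ 2 := by
        apply pow_le_pow_left₀ (norm_nonneg _) h1
    _ ≤ _ := h2

end auxProbability

set_option maxHeartbeats 1000000

lemma aux_coord_le {d : ℕ} (v : EuclideanSpace ℝ (Fin d)) (t : Fin d) : |v t| ≤ ‖v‖ := by
  have h := abs_real_inner_le_norm (EuclideanSpace.single t (1:ℝ)) v
  simpa [EuclideanSpace.inner_single_left, EuclideanSpace.norm_single] using h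

/-- **Variance bound for the quantized distributed SVRG estimator, convex case (Lemma 9).**
Each of `N` workers computes a mini-batch variance-reduced gradient difference `u_i` from `B`
uniform independent indices and quantizes it into `Y_i` with conditional mean-squared error at
most `κ‖u_i‖²`, where `κ = dλ²/(4(2^{b-1}-1)²) + d_λ(1-λ)²`.  Then, with each `f j` convex, the
averaged estimator `v = (1/N)∑ Y_i + ∇f(x̃)` satisfies
`E‖v - ∇f(x)‖² ≤ 4L[dλ²/(4(2^{b-1}-1)²) + d_λ(1-λ)² + 1/(NB)][f(x̃) - f(x) - ⟨∇f(x), x̃ - x⟩]`. -/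
theorem lpc_svrg_variance_bound_convex
    {Ω : Type*} [MeasureSpace Ω] [IsProbabilityMeasure (ℙ : Measure Ω)]
    {d n N B : ℕ} (hn : 0 < n) (hN : 0 < N) (hB : 0 < B)
    (b dlam : ℕ) (hb : 2 ≤ b) (hdlam : dlam ≤ d)
    (lam : ℝ) (hlam : lam ∈ Set.Ioc (0 : ℝ) 1) (L : ℝ)
    (f : Fin n → EuclideanSpace ℝ (Fin d) → ℝ)
    (g : Fin n → EuclideanSpace ℝ (Fin d) → EuclideanSpace ℝ (Fin d))
    (hgrad : ∀ j x, HasGradientAt (f j) (g j x) x)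
    (hconv : ∀ j, ConvexOn ℝ Set.univ (f j))
    (hsmooth : ∀ j x y, ‖g j x - g j y‖ ≤ L * ‖x - y‖)
    (gF : EuclideanSpace ℝ (Fin d) → EuclideanSpace ℝ (Fin d))
    (hgF : ∀ x, HasGradientAt (fun y => (n : ℝ)⁻¹ * ∑ j, f j y) (gF x) x)
    (x xt : EuclideanSpace ℝ (Fin d))
    -- the mini-batch index samples of the `N` workers
    (I : Fin N → Fin B → Ω → Fin n) (hImeas : ∀ i a, Measurable (I i a))
    (hIindep : iIndepFun (fun p : Fin N × Fin B => I p.1 p.2) ℙ)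
    (hIunif : ∀ i a k, ℙ {ω | I i a ω = k} = (n : ℝ≥0∞)⁻¹)
    -- the variance-reduced local gradients
    (u : Fin N → Ω → EuclideanSpace ℝ (Fin d))
    (hu : ∀ i ω, u i ω = (B : ℝ)⁻¹ • ∑ a, (g (I i a ω) x - g (I i a ω) xt))
    -- the quantized gradients, with conditional mean-squared quantization error ≤ κ‖u_i‖²
    (Y : Fin N → Ω → EuclideanSpace ℝ (Fin d)) (hYmeas : ∀ i, Measurable (Y i))
    (hYint : ∀ i, Integrable fun ω => ‖Y i ω - u i ω‖ ^ 2)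
    (hYcond : ∀ i, ∀ᵐ ω ∂ℙ,
      (ℙ[fun ω' => ‖Y i ω' - u i ω'‖ ^ 2 |
          ⨆ p : Fin N × Fin B, MeasurableSpace.comap (I p.1 p.2) inferInstance]) ω ≤
        ((d : ℝ) * lam ^ 2 / (4 * ((2 : ℝ) ^ (b - 1) - 1) ^ 2) +
            (dlam : ℝ) * (1 - lam) ^ 2) * ‖u i ω‖ ^ 2) :
    ∫ ω, ‖(N : ℝ)⁻¹ • ∑ i, Y i ω + gF xt - gF x‖ ^ 2 ≤
      4 * L *
          ((d : ℝ) * lam ^ 2 / (4 * ((2 : ℝ) ^ (b - 1) - 1) ^ 2) +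
            (dlam : ℝ) * (1 - lam) ^ 2 + 1 / ((N : ℝ) * (B : ℝ))) *
        ((n : ℝ)⁻¹ * ∑ j, f j xt - (n : ℝ)⁻¹ * ∑ j, f j x - ⟪gF x, xt - x⟫) := by
  classical
  rcases Nat.eq_zero_or_pos d with hd0 | hd
  · subst hd0
    haveI hsub : Subsingleton (EuclideanSpace ℝ (Fin 0)) :=
      ⟨fun a b => PiLp.ext fun i => i.elim0⟩
    have h0 : ∀ v : EuclideanSpace ℝ (Fin 0), v = 0 := fun v => Subsingleton.elim v 0
    have hxx : xt = x := Subsingleton.elim _ _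
    subst hxx
    have hLHS : (fun ω => ‖(N : ℝ)⁻¹ • ∑ i, Y i ω + gF xt - gF xt‖ ^ 2)
        = fun _ => (0:ℝ) := by
      funext ω; rw [h0 ((N : ℝ)⁻¹ • ∑ i, Y i ω + gF xt - gF xt)]; simp
    rw [hLHS]
    simp
  · -- main case
    have hL0 : 0 ≤ L := by
      have h1 := hsmooth ⟨0, hn⟩ (EuclideanSpace.single ⟨0, hd⟩ (1:ℝ)) 0
      have h2 : ‖EuclideanSpace.single (⟨0, hd⟩ : Fin d) (1:ℝ) - 0‖ = 1 := by
        simp [EuclideanSpace.norm_single]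
      rw [h2, mul_one] at h1
      exact le_trans (norm_nonneg _) h1
    set κ : ℝ := ((d : ℝ) * lam ^ 2 / (4 * ((2 : ℝ) ^ (b - 1) - 1) ^ 2) +
        (dlam : ℝ) * (1 - lam) ^ 2) with hκdef
    have hκ0 : 0 ≤ κ := by positivity
    set ζ : Fin n → EuclideanSpace ℝ (Fin d) := fun k => g k x - g k xt with hζdef
    -- the gradient of the average
    have hgFx : ∀ z, gF z = (n : ℝ)⁻¹ • ∑ j, g j z := by
      intro z
      refine (hgF z).unique ?_
      rw [hasGradientAt_iff_hasFDerivAt]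
      have hsum : HasFDerivAt (fun y => ∑ j, f j y)
          (∑ j, InnerProductSpace.toDual ℝ _ (g j z)) z :=
        HasFDerivAt.fun_sum (fun j _ => (hgrad j z).hasFDerivAt)
      have hc := hsum.const_mul ((n : ℝ)⁻¹)
      have hmap : InnerProductSpace.toDual ℝ (EuclideanSpace ℝ (Fin d))
            ((n : ℝ)⁻¹ • ∑ j, g j z)
          = (n : ℝ)⁻¹ • ∑ j, InnerProductSpace.toDual ℝ _ (g j z) := by
        rw [_root_.map_smul, map_sum]
      rw [hmap]
      exact hc
    -- Bregman divergences
    set D : Fin n → ℝ := fun j => f j xt - f j x - ⟪g j x, xt - x⟫ with hDdef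
    have hD0 : ∀ j, 0 ≤ D j := by
      intro j
      have := aux_grad_ineq (hgrad j x) (hconv j) (y := xt)
      simp only [hDdef]
      linarith
    set S : ℝ := (n : ℝ)⁻¹ * ∑ j, D j with hSdef
    have hS0 : 0 ≤ S := by
      have := Finset.sum_nonneg (fun j (_ : j ∈ Finset.univ) => hD0 j)
      positivity
    have hRHSeq : (n : ℝ)⁻¹ * ∑ j, f j xt - (n : ℝ)⁻¹ * ∑ j, f j x - ⟪gF x, xt - x⟫
        = S := by
      rw [hgFx x]
      have h1 : ⟪(n : ℝ)⁻¹ • ∑ j, g j x, xt - x⟫ = (n : ℝ)⁻¹ * ∑ j, ⟪g j x, xt - x⟫ := by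
        rw [real_inner_smul_left, sum_inner]
      rw [h1, hSdef]
      have h2 : ∑ j, D j = ∑ j, f j xt - ∑ j, f j x - ∑ j, ⟪g j x, xt - x⟫ := by
        simp [hDdef, Finset.sum_sub_distrib]
      rw [h2]
      ring
    have hcoco : ∀ k, ‖ζ k‖ ^ 2 ≤ 2 * L * D k := by
      intro k
      have := aux_cocoercive (hgrad k) (hconv k) hL0 (hsmooth k) x xt
      have hrev : ‖ζ k‖ = ‖g k xt - g k x‖ := by rw [hζdef]; exact norm_sub_rev _ _
      rw [hrev]
      simpa [hDdef] using this
    have hsum2LS : (n : ℝ)⁻¹ * ∑ k, ‖ζ k‖ ^ 2 ≤ 2 * L * S := by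
      have h1 : ∑ k, ‖ζ k‖ ^ 2 ≤ ∑ k, 2 * L * D k :=
        Finset.sum_le_sum (fun k _ => hcoco k)
      have h2 : (n : ℝ)⁻¹ * ∑ k, 2 * L * D k = 2 * L * S := by
        rw [hSdef, ← Finset.mul_sum]; ring
      calc (n : ℝ)⁻¹ * ∑ k, ‖ζ k‖ ^ 2 ≤ (n : ℝ)⁻¹ * ∑ k, 2 * L * D k := by
            apply mul_le_mul_of_nonneg_left h1 (by positivity)
        _ = 2 * L * S := h2
    -- measurability and boundedness
    have hζm : ∀ (i : Fin N) (a : Fin B), Measurable (fun ω => ζ (I i a ω)) :=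
      fun i a => (measurable_of_countable ζ).comp (hImeas i a)
    have huζ : ∀ i ω, u i ω = (B : ℝ)⁻¹ • ∑ a, ζ (I i a ω) := fun i ω => hu i ω
    have humeas : ∀ i, Measurable (u i) := by
      intro i
      have : u i = fun ω => (B : ℝ)⁻¹ • ∑ a, ζ (I i a ω) := funext fun ω => huζ i ω
      rw [this]
      exact (Finset.measurable_fun_sum _ (fun a _ => hζm i a)).fun_const_smul _
    set C : ℝ := ∑ k, ‖ζ k‖ with hCdef
    have hCk : ∀ k, ‖ζ k‖ ≤ C := fun k =>
      Finset.single_le_sum (fun k _ => norm_nonneg (ζ k)) (Finset.mem_univ k)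
    have hC0 : 0 ≤ C := Finset.sum_nonneg (fun k _ => norm_nonneg (ζ k))
    have hub : ∀ i ω, ‖u i ω‖ ≤ C := by
      intro i ω
      rw [huζ i ω, norm_smul]
      have h1 : ‖∑ a, ζ (I i a ω)‖ ≤ ∑ a : Fin B, C :=
        le_trans (norm_sum_le _ _) (Finset.sum_le_sum fun a _ => hCk _)
      have h2 : ‖((B:ℝ)⁻¹ : ℝ)‖ = (B:ℝ)⁻¹ := by
        rw [Real.norm_eq_abs, abs_of_nonneg (by positivity)]
      rw [h2]
      calc (B:ℝ)⁻¹ * ‖∑ a, ζ (I i a ω)‖ ≤ (B:ℝ)⁻¹ * ((B:ℝ) * C) := by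
            apply mul_le_mul_of_nonneg_left _ (by positivity)
            simpa [Finset.sum_const, Finset.card_univ, mul_comm] using h1
        _ = C := by field_simp
    -- Step 2: conditional-expectation bound
    have hm : (⨆ p : Fin N × Fin B, MeasurableSpace.comap (I p.1 p.2) inferInstance)
        ≤ (MeasureSpace.toMeasurableSpace : MeasurableSpace Ω) :=
      iSup_le fun p => (hImeas p.1 p.2).comap_le
    have hu2int : ∀ i, Integrable (fun ω => ‖u i ω‖ ^ 2) ℙ := by
      intro i
      apply aux_int_of_bound ((humeas i).norm.pow_const 2).aestronglyMeasurable (C ^ 2)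
      intro ω
      rw [abs_of_nonneg (by positivity)]
      exact pow_le_pow_left₀ (norm_nonneg _) (hub i ω) 2
    have hYu : ∀ i, ∫ ω, ‖Y i ω - u i ω‖ ^ 2 ≤ κ * ∫ ω, ‖u i ω‖ ^ 2 := by
      intro i
      have h1 : ∫ ω, ‖Y i ω - u i ω‖ ^ 2
          = ∫ ω, (ℙ[fun ω' => ‖Y i ω' - u i ω'‖ ^ 2 |
            ⨆ p : Fin N × Fin B, MeasurableSpace.comap (I p.1 p.2) inferInstance]) ω :=
        (integral_condExp hm).symm
      have hint2 : Integrable (fun ω => κ * ‖u i ω‖ ^ 2) ℙ := (hu2int i).const_mul κ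
      have h2 : ∫ ω, (ℙ[fun ω' => ‖Y i ω' - u i ω'‖ ^ 2 |
            ⨆ p : Fin N × Fin B, MeasurableSpace.comap (I p.1 p.2) inferInstance]) ω
          ≤ ∫ ω, κ * ‖u i ω‖ ^ 2 :=
        integral_mono_ae integrable_condExp hint2 (hYcond i)
      rw [integral_const_mul] at h2
      rw [h1]
      exact h2
    -- Step 3: second moment of u
    have hu2 : ∀ i, ∫ ω, ‖u i ω‖ ^ 2 ≤ 2 * L * S := by
      intro i
      have hptw : ∀ ω, ‖u i ω‖ ^ 2 ≤ (B : ℝ)⁻¹ * ∑ a, ‖ζ (I i a ω)‖ ^ 2 := by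
        intro ω
        rw [huζ i ω, norm_smul]
        have h1 := aux_norm_avg_sq (fun a : Fin B => ζ (I i a ω))
        rw [Fintype.card_fin] at h1
        have h2 : ‖((B:ℝ)⁻¹ : ℝ)‖ = (B:ℝ)⁻¹ := by
          rw [Real.norm_eq_abs, abs_of_nonneg (by positivity)]
        rw [h2, mul_pow]
        calc ((B:ℝ)⁻¹) ^ 2 * ‖∑ a, ζ (I i a ω)‖ ^ 2
            ≤ ((B:ℝ)⁻¹) ^ 2 * ((B : ℝ) * ∑ a, ‖ζ (I i a ω)‖ ^ 2) := by
              apply mul_le_mul_of_nonneg_left h1 (by positivity)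
          _ = (B : ℝ)⁻¹ * ∑ a, ‖ζ (I i a ω)‖ ^ 2 := by
              field_simp
      have hintg : ∀ a : Fin B, Integrable (fun ω => ‖ζ (I i a ω)‖ ^ 2) ℙ := by
        intro a
        apply aux_int_of_bound ((hζm i a).norm.pow_const 2).aestronglyMeasurable (C ^ 2)
        intro ω
        rw [abs_of_nonneg (by positivity)]
        exact pow_le_pow_left₀ (norm_nonneg _) (hCk _) 2
      have hintsum : Integrable (fun ω => (B : ℝ)⁻¹ * ∑ a, ‖ζ (I i a ω)‖ ^ 2) ℙ :=
        (integrable_finset_sum _ (fun a _ => hintg a)).const_mul _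
      calc ∫ ω, ‖u i ω‖ ^ 2
          ≤ ∫ ω, (B : ℝ)⁻¹ * ∑ a, ‖ζ (I i a ω)‖ ^ 2 :=
            integral_mono (hu2int i) hintsum hptw
        _ = (B : ℝ)⁻¹ * ∑ a : Fin B, ∫ ω, ‖ζ (I i a ω)‖ ^ 2 := by
            rw [integral_const_mul, integral_finset_sum _ (fun a _ => hintg a)]
        _ = (B : ℝ)⁻¹ * ∑ a : Fin B, ((n : ℝ)⁻¹ * ∑ k, ‖ζ k‖ ^ 2) := by
            congr 1
            exact Finset.sum_congr rfl fun a _ =>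
              aux_unif_exp hn (hImeas i a) (hIunif i a) (fun k => ‖ζ k‖ ^ 2)
        _ = (n : ℝ)⁻¹ * ∑ k, ‖ζ k‖ ^ 2 := by
            rw [Finset.sum_const, Finset.card_univ, Fintype.card_fin, nsmul_eq_mul]
            field_simp
        _ ≤ 2 * L * S := hsum2LS
    -- decomposition v - ∇f(x) = A + W
    set G : EuclideanSpace ℝ (Fin d) := gF x - gF xt with hGdef
    have hGval : G = (n : ℝ)⁻¹ • ∑ k, ζ k := by
      rw [hGdef, hgFx x, hgFx xt, ← smul_sub, ← Finset.sum_sub_distrib]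
    set A : Ω → EuclideanSpace ℝ (Fin d) :=
      fun ω => (N : ℝ)⁻¹ • ∑ i, (Y i ω - u i ω) with hAdef
    set W : Ω → EuclideanSpace ℝ (Fin d) :=
      fun ω => (N : ℝ)⁻¹ • ∑ i, u i ω - G with hWdef
    have hkey : ∀ ω, (N : ℝ)⁻¹ • ∑ i, Y i ω + gF xt - gF x = A ω + W ω := by
      intro ω
      simp only [hAdef, hWdef, hGdef]
      rw [Finset.sum_sub_distrib, smul_sub]
      abel
    have hWZ : ∀ ω, W ω = ((N : ℝ) * (B : ℝ))⁻¹ •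
        ∑ p : Fin N × Fin B, (ζ (I p.1 p.2 ω) - G) := by
      intro ω
      have hNB0 : ((N : ℝ) * (B : ℝ)) ≠ 0 := by positivity
      have h1 : (N : ℝ)⁻¹ • ∑ i, u i ω
          = ((N : ℝ) * (B : ℝ))⁻¹ • ∑ p : Fin N × Fin B, ζ (I p.1 p.2 ω) := by
        calc (N : ℝ)⁻¹ • ∑ i, u i ω
            = (N : ℝ)⁻¹ • ∑ i, (B : ℝ)⁻¹ • ∑ a, ζ (I i a ω) := by
              simp only [huζ]
          _ = ((N : ℝ) * (B : ℝ))⁻¹ • ∑ i, ∑ a, ζ (I i a ω) := by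
              rw [← Finset.smul_sum, smul_smul, mul_inv]
          _ = _ := by rw [Fintype.sum_prod_type]
      have h2 : ∑ p : Fin N × Fin B, (ζ (I p.1 p.2 ω) - G)
          = (∑ p : Fin N × Fin B, ζ (I p.1 p.2 ω)) - ((N : ℝ) * (B : ℝ)) • G := by
        rw [Finset.sum_sub_distrib, Finset.sum_const, Finset.card_univ]
        congr 1
        rw [← Nat.cast_smul_eq_nsmul ℝ]
        congr 1
        simp [Fintype.card_prod]
      simp only [hWdef]
      rw [h1, h2, smul_sub, smul_smul, inv_mul_cancel₀ hNB0, one_smul]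
    -- measurability / integrability of A and W
    have hAmeas : Measurable A :=
      (Finset.measurable_fun_sum _ fun i _ => (hYmeas i).sub (humeas i)).fun_const_smul _
    have hWmeas : Measurable W :=
      ((Finset.measurable_fun_sum _ fun i _ => humeas i).fun_const_smul _).sub measurable_const
    have hdom : Integrable (fun ω => (N : ℝ)⁻¹ * ∑ i, ‖Y i ω - u i ω‖ ^ 2) ℙ :=
      (integrable_finset_sum _ fun i _ => hYint i).const_mul _
    have hAptw : ∀ ω, ‖A ω‖ ^ 2 ≤ (N : ℝ)⁻¹ * ∑ i, ‖Y i ω - u i ω‖ ^ 2 := by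
      intro ω
      rw [hAdef, norm_smul]
      have h1 := aux_norm_avg_sq (fun i : Fin N => Y i ω - u i ω)
      rw [Fintype.card_fin] at h1
      have h2 : ‖((N : ℝ)⁻¹ : ℝ)‖ = (N : ℝ)⁻¹ := by
        rw [Real.norm_eq_abs, abs_of_nonneg (by positivity)]
      rw [h2, mul_pow]
      calc ((N : ℝ)⁻¹) ^ 2 * ‖∑ i, (Y i ω - u i ω)‖ ^ 2
          ≤ ((N : ℝ)⁻¹) ^ 2 * ((N : ℝ) * ∑ i, ‖Y i ω - u i ω‖ ^ 2) := by
            apply mul_le_mul_of_nonneg_left h1 (by positivity)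
        _ = (N : ℝ)⁻¹ * ∑ i, ‖Y i ω - u i ω‖ ^ 2 := by field_simp
    have hintA : Integrable (fun ω => ‖A ω‖ ^ 2) ℙ := by
      apply hdom.mono' (hAmeas.norm.pow_const 2).aestronglyMeasurable
      apply Filter.Eventually.of_forall
      intro ω
      rw [Real.norm_eq_abs, abs_of_nonneg (by positivity)]
      exact hAptw ω
    have hWb : ∀ ω, ‖W ω‖ ≤ C + ‖G‖ := by
      intro ω
      rw [hWdef]
      refine le_trans (norm_sub_le _ _) (add_le_add ?_ le_rfl)
      rw [norm_smul]
      have h2 : ‖((N : ℝ)⁻¹ : ℝ)‖ = (N : ℝ)⁻¹ := by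
        rw [Real.norm_eq_abs, abs_of_nonneg (by positivity)]
      rw [h2]
      have h1 : ‖∑ i, u i ω‖ ≤ (N : ℝ) * C := by
        refine le_trans (norm_sum_le _ _) ?_
        calc ∑ i : Fin N, ‖u i ω‖ ≤ ∑ i : Fin N, C := Finset.sum_le_sum fun i _ => hub i ω
          _ = (N : ℝ) * C := by simp [Finset.sum_const, Finset.card_univ, mul_comm]
      calc (N : ℝ)⁻¹ * ‖∑ i, u i ω‖ ≤ (N : ℝ)⁻¹ * ((N : ℝ) * C) := by
            apply mul_le_mul_of_nonneg_left h1 (by positivity)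
        _ = C := by field_simp
    have hintW : Integrable (fun ω => ‖W ω‖ ^ 2) ℙ := by
      apply aux_int_of_bound (hWmeas.norm.pow_const 2).aestronglyMeasurable ((C + ‖G‖) ^ 2)
      intro ω
      rw [abs_of_nonneg (by positivity)]
      exact pow_le_pow_left₀ (norm_nonneg _) (hWb ω) 2
    -- Step 1: split the square
    have hstep1 : ∫ ω, ‖(N : ℝ)⁻¹ • ∑ i, Y i ω + gF xt - gF x‖ ^ 2
        ≤ 2 * (∫ ω, ‖A ω‖ ^ 2) + 2 * ∫ ω, ‖W ω‖ ^ 2 := by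
      have hptw : ∀ ω, ‖A ω + W ω‖ ^ 2 ≤ 2 * ‖A ω‖ ^ 2 + 2 * ‖W ω‖ ^ 2 := by
        intro ω
        have h1 : ‖A ω + W ω‖ ≤ ‖A ω‖ + ‖W ω‖ := norm_add_le _ _
        have h2 : ‖A ω + W ω‖ ^ 2 ≤ (‖A ω‖ + ‖W ω‖) ^ 2 :=
          pow_le_pow_left₀ (norm_nonneg _) h1 2
        nlinarith [sq_nonneg (‖A ω‖ - ‖W ω‖)]
      have hrw : (fun ω => ‖(N : ℝ)⁻¹ • ∑ i, Y i ω + gF xt - gF x‖ ^ 2)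
          = fun ω => ‖A ω + W ω‖ ^ 2 := funext fun ω => by rw [hkey ω]
      rw [hrw]
      have hint2 : Integrable (fun ω => 2 * ‖A ω‖ ^ 2 + 2 * ‖W ω‖ ^ 2) ℙ :=
        (hintA.const_mul 2).add (hintW.const_mul 2)
      have hintAW : Integrable (fun ω => ‖A ω + W ω‖ ^ 2) ℙ := by
        apply hint2.mono' ((hAmeas.add hWmeas).norm.pow_const 2).aestronglyMeasurable
        apply Filter.Eventually.of_forall
        intro ω
        rw [Real.norm_eq_abs, abs_of_nonneg (by positivity)]
        exact hptw ω
      calc ∫ ω, ‖A ω + W ω‖ ^ 2 ≤ ∫ ω, (2 * ‖A ω‖ ^ 2 + 2 * ‖W ω‖ ^ 2) :=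
            integral_mono hintAW hint2 hptw
        _ = 2 * (∫ ω, ‖A ω‖ ^ 2) + 2 * ∫ ω, ‖W ω‖ ^ 2 := by
            rw [integral_add (hintA.const_mul 2) (hintW.const_mul 2),
              integral_const_mul, integral_const_mul]
    -- Step A: quantization error term
    have hstepA : ∫ ω, ‖A ω‖ ^ 2 ≤ κ * (2 * L * S) := by
      calc ∫ ω, ‖A ω‖ ^ 2 ≤ ∫ ω, (N : ℝ)⁻¹ * ∑ i, ‖Y i ω - u i ω‖ ^ 2 :=
            integral_mono hintA hdom hAptw
        _ = (N : ℝ)⁻¹ * ∑ i, ∫ ω, ‖Y i ω - u i ω‖ ^ 2 := by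
            rw [integral_const_mul, integral_finset_sum _ fun i _ => hYint i]
        _ ≤ (N : ℝ)⁻¹ * ∑ i : Fin N, κ * (2 * L * S) := by
            apply mul_le_mul_of_nonneg_left _ (by positivity)
            refine Finset.sum_le_sum fun i _ => le_trans (hYu i) ?_
            exact mul_le_mul_of_nonneg_left (hu2 i) hκ0
        _ = κ * (2 * L * S) := by
            rw [Finset.sum_const, Finset.card_univ, Fintype.card_fin, nsmul_eq_mul]
            field_simp
    -- Step W: sampling variance term
    have hstepW : ∫ ω, ‖W ω‖ ^ 2 ≤ ((N : ℝ) * (B : ℝ))⁻¹ * (2 * L * S) := by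
      set ξ : Fin n → EuclideanSpace ℝ (Fin d) := fun k => ζ k - G with hξdef
      have hn0 : (n : ℝ) ≠ 0 := by positivity
      have hsz : ∑ k, ζ k = (n : ℝ) • G := by
        rw [hGval, smul_smul, mul_inv_cancel₀ hn0, one_smul]
      have hξsum : ∑ k, ξ k = 0 := by
        simp only [hξdef]
        rw [Finset.sum_sub_distrib, Finset.sum_const, Finset.card_univ, Fintype.card_fin,
          hsz, ← Nat.cast_smul_eq_nsmul ℝ, sub_self]
      have hcoordzero : ∀ (i : Fin N) (a : Fin B) (t : Fin d),
          ∫ ω, ξ (I i a ω) t = 0 := by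
        intro i a t
        rw [aux_unif_exp hn (hImeas i a) (hIunif i a) (fun k => ξ k t)]
        have h1 : ∑ k, ξ k t = 0 := by
          have h2 : (EuclideanSpace.proj t : EuclideanSpace ℝ (Fin d) →L[ℝ] ℝ) (∑ k, ξ k)
              = EuclideanSpace.proj t (0 : EuclideanSpace ℝ (Fin d)) := by rw [hξsum]
          rw [map_sum, map_zero] at h2
          simpa using h2
        rw [h1, mul_zero]
      have hξnb : ∀ k, ‖ξ k‖ ≤ C + ‖G‖ := fun k =>
        le_trans (norm_sub_le _ _) (add_le_add (hCk k) le_rfl)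
      have hξb : ∀ k t, |ξ k t| ≤ C + ‖G‖ := fun k t =>
        le_trans (aux_coord_le _ t) (hξnb k)
      have hcoordmeas : ∀ (p : Fin N × Fin B) (t : Fin d),
          Measurable (fun ω => ξ (I p.1 p.2 ω) t) := fun p t =>
        (measurable_of_countable (fun k => ξ k t)).comp (hImeas p.1 p.2)
      have hcross : ∀ p q : Fin N × Fin B, p ≠ q →
          ∫ ω, ⟪ξ (I p.1 p.2 ω), ξ (I q.1 q.2 ω)⟫ = 0 := by
        intro p q hpq
        have hip : (fun ω => ⟪ξ (I p.1 p.2 ω), ξ (I q.1 q.2 ω)⟫)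
            = fun ω => ∑ t, (ξ (I p.1 p.2 ω) t) * (ξ (I q.1 q.2 ω) t) := by
          funext ω
          rw [PiLp.inner_apply]
          simp [RCLike.inner_apply]
          exact Finset.sum_congr rfl fun _ _ => mul_comm _ _
        rw [hip]
        have hintprod : ∀ t : Fin d, Integrable
            (fun ω => (ξ (I p.1 p.2 ω) t) * (ξ (I q.1 q.2 ω) t)) ℙ := by
          intro t
          apply aux_int_of_bound ((hcoordmeas p t).mul (hcoordmeas q t)).aestronglyMeasurable
            ((C + ‖G‖) ^ 2)
          intro ω
          rw [Pi.mul_apply, abs_mul, sq]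
          exact mul_le_mul (hξb _ t) (hξb _ t) (abs_nonneg _)
            (le_trans (abs_nonneg _) (hξb (I p.1 p.2 ω) t))
        rw [integral_finset_sum _ (fun t _ => hintprod t)]
        apply Finset.sum_eq_zero
        intro t _
        have hind : IndepFun (fun ω => ξ (I p.1 p.2 ω) t) (fun ω => ξ (I q.1 q.2 ω) t) ℙ := by
          have h0 : IndepFun (I p.1 p.2) (I q.1 q.2) ℙ := hIindep.indepFun hpq
          exact h0.comp (measurable_of_countable (fun k => ξ k t))
            (measurable_of_countable (fun k => ξ k t))
        rw [hind.integral_fun_mul_eq_mul_integral (hcoordmeas p t).aestronglyMeasurable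
          (hcoordmeas q t).aestronglyMeasurable, hcoordzero p.1 p.2 t, zero_mul]
      -- diagonal terms
      have hξsq : ∑ k, ‖ξ k‖ ^ 2 ≤ ∑ k, ‖ζ k‖ ^ 2 := by
        have hexp : ∀ k : Fin n, ‖ξ k‖ ^ 2 = ‖ζ k‖ ^ 2 - 2 * ⟪ζ k, G⟫ + ‖G‖ ^ 2 :=
          fun k => norm_sub_sq_real _ _
        rw [Finset.sum_congr rfl fun k _ => hexp k]
        rw [Finset.sum_add_distrib, Finset.sum_sub_distrib, Finset.sum_const,
          Finset.card_univ, Fintype.card_fin, ← Finset.mul_sum, ← sum_inner, hsz,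
          real_inner_smul_left, real_inner_self_eq_norm_sq, nsmul_eq_mul]
        have hng : (0:ℝ) ≤ (n : ℝ) * ‖G‖ ^ 2 := by positivity
        linarith
      have hdiag : ∀ p : Fin N × Fin B, ∫ ω, ‖ξ (I p.1 p.2 ω)‖ ^ 2 ≤ 2 * L * S := by
        intro p
        rw [aux_unif_exp hn (hImeas p.1 p.2) (hIunif p.1 p.2) (fun k => ‖ξ k‖ ^ 2)]
        calc (n : ℝ)⁻¹ * ∑ k, ‖ξ k‖ ^ 2 ≤ (n : ℝ)⁻¹ * ∑ k, ‖ζ k‖ ^ 2 :=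
              mul_le_mul_of_nonneg_left hξsq (by positivity)
          _ ≤ 2 * L * S := hsum2LS
      -- expansion of the square
      have hinner_int : ∀ p q : Fin N × Fin B, Integrable
          (fun ω => ⟪ξ (I p.1 p.2 ω), ξ (I q.1 q.2 ω)⟫) ℙ := by
        intro p q
        have hme : Measurable (fun ω => ⟪ξ (I p.1 p.2 ω), ξ (I q.1 q.2 ω)⟫) := by
          apply Measurable.inner
          · exact (measurable_of_countable ξ).comp (hImeas p.1 p.2)
          · exact (measurable_of_countable ξ).comp (hImeas q.1 q.2)
        apply aux_int_of_bound hme.aestronglyMeasurable ((C + ‖G‖) ^ 2)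
        intro ω
        refine le_trans (abs_real_inner_le_norm _ _) ?_
        rw [sq]
        exact mul_le_mul (hξnb _) (hξnb _) (norm_nonneg _)
          (le_trans (norm_nonneg _) (hξnb (I p.1 p.2 ω)))
      have hWexp : (fun ω => ‖W ω‖ ^ 2) = fun ω =>
          (((N : ℝ) * (B : ℝ))⁻¹) ^ 2 *
            ∑ p : Fin N × Fin B, ∑ q : Fin N × Fin B,
              ⟪ξ (I p.1 p.2 ω), ξ (I q.1 q.2 ω)⟫ := by
        funext ω
        rw [hWZ ω, norm_smul, mul_pow]
        congr 1
        · rw [Real.norm_eq_abs, sq_abs]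
        · rw [← real_inner_self_eq_norm_sq, sum_inner]
          exact Finset.sum_congr rfl fun p _ => inner_sum _ _ _
      rw [hWexp]
      rw [integral_const_mul, integral_finset_sum _
        (fun p _ => integrable_finset_sum _ (fun q _ => hinner_int p q))]
      have hsums : ∑ p : Fin N × Fin B, ∫ ω, ∑ q : Fin N × Fin B,
          ⟪ξ (I p.1 p.2 ω), ξ (I q.1 q.2 ω)⟫ ≤ (N : ℝ) * (B : ℝ) * (2 * L * S) := by
        have hone : ∀ p : Fin N × Fin B, ∫ ω, ∑ q : Fin N × Fin B,
            ⟪ξ (I p.1 p.2 ω), ξ (I q.1 q.2 ω)⟫ ≤ 2 * L * S := by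
          intro p
          rw [integral_finset_sum _ (fun q _ => hinner_int p q)]
          rw [Finset.sum_eq_single_of_mem p (Finset.mem_univ p)
            (fun q _ hq => hcross p q (Ne.symm hq))]
          have h2 : (fun ω => ⟪ξ (I p.1 p.2 ω), ξ (I p.1 p.2 ω)⟫)
              = fun ω => ‖ξ (I p.1 p.2 ω)‖ ^ 2 := by
            funext ω; rw [real_inner_self_eq_norm_sq]
          rw [h2]
          exact hdiag p
        calc ∑ p : Fin N × Fin B, ∫ ω, ∑ q : Fin N × Fin B,
              ⟪ξ (I p.1 p.2 ω), ξ (I q.1 q.2 ω)⟫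
            ≤ ∑ _p : Fin N × Fin B, 2 * L * S := Finset.sum_le_sum fun p _ => hone p
          _ = (N : ℝ) * (B : ℝ) * (2 * L * S) := by
              rw [Finset.sum_const, Finset.card_univ, nsmul_eq_mul]
              simp [Fintype.card_prod]
      calc (((N : ℝ) * (B : ℝ))⁻¹) ^ 2 * ∑ p : Fin N × Fin B, ∫ ω, ∑ q : Fin N × Fin B,
            ⟪ξ (I p.1 p.2 ω), ξ (I q.1 q.2 ω)⟫
          ≤ (((N : ℝ) * (B : ℝ))⁻¹) ^ 2 * ((N : ℝ) * (B : ℝ) * (2 * L * S)) :=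
            mul_le_mul_of_nonneg_left hsums (by positivity)
        _ = ((N : ℝ) * (B : ℝ))⁻¹ * (2 * L * S) := by
            field_simp
    -- combine everything
    have hfinal : ∫ ω, ‖(N : ℝ)⁻¹ • ∑ i, Y i ω + gF xt - gF x‖ ^ 2
        ≤ 4 * L * (κ + 1 / ((N : ℝ) * (B : ℝ))) * S := by
      calc ∫ ω, ‖(N : ℝ)⁻¹ • ∑ i, Y i ω + gF xt - gF x‖ ^ 2
          ≤ 2 * (∫ ω, ‖A ω‖ ^ 2) + 2 * ∫ ω, ‖W ω‖ ^ 2 := hstep1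
        _ ≤ 2 * (κ * (2 * L * S)) + 2 * (((N : ℝ) * (B : ℝ))⁻¹ * (2 * L * S)) := by
            have h1 := mul_le_mul_of_nonneg_left hstepA (by norm_num : (0:ℝ) ≤ 2)
            have h2 := mul_le_mul_of_nonneg_left hstepW (by norm_num : (0:ℝ) ≤ 2)
            exact add_le_add h1 h2
        _ = 4 * L * (κ + 1 / ((N : ℝ) * (B : ℝ))) * S := by
            rw [one_div]
            ring
    rw [hRHSeq]
    exact hfinal
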